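/- arXiv:2411.16574 — 5 statements merged into one kernel-verified Lean document; each statement's English description precedes it below -/
import Mathlib

section
/- Fix real numbers β and γ with 1 > β > γ > 0. Let A be a deterministic, path-invariant bandit algorithm, i.e., a function from histories (finite lists of (action, reward) pairs with actions in {H,L} and real rewards) to actions such that A(h) = A(h') whenever h and h' are path-equivalent. Suppose two players both run A in the repeated Prisoner's Dilemma: at each round t, player i plays a_i(t) = A(h_i(t)), where h_i(t) is the list of player i's own (action, reward) pairs from rounds 0,…,t−1, the round's rewards are the Prisoner's Dilemma payoffs of the joint action (a_0(t), a_1(t)), and each player appends its own (action, reward) pair to its history. If at some round t* the two players' histories h_0(t*) and h_1(t*) are path-equivalent, then for every round t ≥ t*: (1) a_0(t) = a_1(t), and (2) h_0(t) and h_1(t) are path-equivalent. -/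
/-- An action in the Prisoner's Dilemma. -/
inductive Act : Type
  | H | L
  deriving DecidableEq

/-- The Prisoner's Dilemma payoff to a player who plays the first action while
the opponent plays the second action. -/
def pay (β γ : ℝ) : Act → Act → ℝ
  | .H, .H => β
  | .H, .L => 0
  | .L, .H => 1
  | .L, .L => γ

/-- The number of entries of a history (a finite list of (action, reward)
pairs) whose action is `a`. -/
def cnt (a : Act) (h : List (Act × ℝ)) : ℕ :=
  (h.filter (fun p => p.1 = a)).length

/-- The sum of the rewards over the entries of a history whose action is `a`. -/
def tot (a : Act) (h : List (Act × ℝ)) : ℝ :=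
  ((h.filter (fun p => p.1 = a)).map Prod.snd).sum

/-- Two histories are path-equivalent if, for each action, the number of
entries with that action and the sum of rewards over those entries agree. -/
def PathEq (h h' : List (Act × ℝ)) : Prop :=
  ∀ a : Act, cnt a h = cnt a h' ∧ tot a h = tot a h'

/-- Lemma 4 of the paper: if two players both run a deterministic,
path-invariant bandit algorithm `A` in the repeated Prisoner's Dilemma, and at
some round `t*` their histories are path-equivalent, then at every round
`t ≥ t*` they play the same action and their histories remain path-equivalent. -/
theorem stmt4 (β γ : ℝ) (hβ1 : β < 1) (hγβ : γ < β) (hγ0 : 0 < γ)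
    (A : List (Act × ℝ) → Act)
    (hA : ∀ h h' : List (Act × ℝ), PathEq h h' → A h = A h')
    (a : Fin 2 → ℕ → Act) (h : Fin 2 → ℕ → List (Act × ℝ))
    (ha : ∀ (i : Fin 2) (t : ℕ), a i t = A (h i t))
    (hrec : ∀ (i : Fin 2) (t : ℕ),
      h i (t + 1) = h i t ++ [(a i t, pay β γ (a i t) (a (1 - i) t))])
    (tstar : ℕ) (hstar : PathEq (h 0 tstar) (h 1 tstar)) :
    ∀ t : ℕ, tstar ≤ t → a 0 t = a 1 t ∧ PathEq (h 0 t) (h 1 t) := by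
  have step : ∀ t : ℕ, PathEq (h 0 t) (h 1 t) →
      a 0 t = a 1 t ∧ PathEq (h 0 (t+1)) (h 1 (t+1)) := by
    intro t hpe
    have haa : a 0 t = a 1 t := by rw [ha 0 t, ha 1 t]; exact hA _ _ hpe
    refine ⟨haa, ?_⟩
    rw [hrec 0 t, hrec 1 t]
    have h10 : (1 - (0 : Fin 2)) = 1 := rfl
    have h11 : (1 - (1 : Fin 2)) = 0 := rfl
    rw [h10, h11, haa]
    intro x
    obtain ⟨hc, ht⟩ := hpe x
    constructor
    · simp only [cnt] at hc ⊢; simp [List.filter_append, hc]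
    · simp only [tot] at ht ⊢; simp [List.filter_append, ht]
  intro t htle
  induction t with
  | zero =>
      have : tstar = 0 := Nat.le_zero.mp htle
      subst this
      exact ⟨by rw [ha 0 0, ha 1 0]; exact hA _ _ hstar, hstar⟩
  | succ n ih =>
      rcases Nat.lt_or_ge tstar (n+1) with hlt | hge
      · have := ih (Nat.lt_succ_iff.mp hlt)
        exact ⟨by rw [ha 0 _, ha 1 _]; exact hA _ _ (step n this.2).2, (step n this.2).2⟩
      · have : tstar = n+1 := le_antisymm htle hge
        subst this
        exact ⟨by rw [ha 0 _, ha 1 _]; exact hA _ _ hstar, hstar⟩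
end

section
/- Fix real numbers β and γ with 1 > β > γ > 0. Let A be a deterministic bandit algorithm (a function from histories to actions), and suppose two players both run A in the repeated Prisoner's Dilemma: at each round t, player i plays a_i(t) = A(h_i(t)), where h_i(t) is the list of player i's own (action, reward) pairs from rounds 0,…,t−1, rewards are the Prisoner's Dilemma payoffs of the joint action, and histories are extended accordingly. Assume the resulting play is non-degenerate in that there exists a round in which H is played and a round in which L is played. Then there exists a finite time T such that for all t ≥ T and both players i: player i's empirical mean reward for H over h_i(t) equals β, player i's empirical mean reward for L over h_i(t) equals γ, and hence the value estimate of H strictly exceeds the value estimate of L (i.e., the target policy of both players is H for all t ≥ T: the players learn to collude). -/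
/-- The value estimate of action `a` given a history: the empirical mean of
the rewards over entries with action `a` (0 if `a` never appears). -/
noncomputable def val (a : Act) (h : List (Act × ℝ)) : ℝ :=
  if cnt a h = 0 then 0 else tot a h / (cnt a h : ℝ)

/-- Proposition 1 of the paper: two symmetric deterministic bandits playing the
infinitely repeated Prisoner's Dilemma (starting from empty histories, with the
resulting play non-degenerate in that both H and L are played at some rounds)
learn to collude: eventually both players' value estimates of H equal `β`,
their value estimates of L equal `γ`, and hence the value estimate of H
strictly exceeds that of L, forever after. -/
theorem stmt5 (β γ : ℝ) (hβ1 : β < 1) (hγβ : γ < β) (hγ0 : 0 < γ)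
    (A : List (Act × ℝ) → Act)
    (a : Fin 2 → ℕ → Act) (h : Fin 2 → ℕ → List (Act × ℝ))
    (hinit : ∀ i : Fin 2, h i 0 = [])
    (ha : ∀ (i : Fin 2) (t : ℕ), a i t = A (h i t))
    (hrec : ∀ (i : Fin 2) (t : ℕ),
      h i (t + 1) = h i t ++ [(a i t, pay β γ (a i t) (a (1 - i) t))])
    (hH : ∃ (t : ℕ) (i : Fin 2), a i t = Act.H)
    (hL : ∃ (t : ℕ) (i : Fin 2), a i t = Act.L) :
    ∃ T : ℕ, ∀ t : ℕ, T ≤ t → ∀ i : Fin 2,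
      val Act.H (h i t) = β ∧ val Act.L (h i t) = γ ∧
      val Act.H (h i t) > val Act.L (h i t) := by

  -- Both players have the same history at every time.
  have hsym : ∀ t, h 0 t = h 1 t := by
    intro t
    induction t with
    | zero => rw [hinit, hinit]
    | succ t ih =>
      have ha0 : a 0 t = a 1 t := by rw [ha, ha, ih]
      rw [hrec, hrec, ih]
      have : (1 - (0 : Fin 2)) = 1 := by decide
      rw [this]
      have : (1 - (1 : Fin 2)) = 0 := by decide
      rw [this, ha0]
  have hall : ∀ (i : Fin 2) t, h i t = h 0 t := by
    intro i t; fin_cases i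
    · rfl
    · exact (hsym t).symm
  have haall : ∀ (i : Fin 2) t, a i t = a 0 t := by
    intro i t; rw [ha, ha, hall]
  -- every entry in the history is (H, β) or (L, γ)
  have hmem : ∀ t (p : Act × ℝ), p ∈ h 0 t → p = (Act.H, β) ∨ p = (Act.L, γ) := by
    intro t
    induction t with
    | zero => intro p hp; rw [hinit] at hp; simp at hp
    | succ t ih =>
      intro p hp
      rw [hrec] at hp
      rcases List.mem_append.1 hp with hp | hp
      · exact ih p hp
      · simp only [List.mem_singleton] at hp
        rw [haall (1 - 0) t] at hp
        cases hcase : a 0 t <;> simp [hcase, pay] at hp <;> simp [hp]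
  -- membership persists
  have hgrow : ∀ t t', t ≤ t' → ∀ p : Act × ℝ, p ∈ h 0 t → p ∈ h 0 t' := by
    intro t t' htt'
    induction t' , htt' using Nat.le_induction with
    | base => intro p hp; exact hp
    | succ n hn ih =>
      intro p hp
      rw [hrec]
      exact List.mem_append.2 (Or.inl (ih p hp))
  obtain ⟨tH, iH, hiH⟩ := hH
  obtain ⟨tL, iL, hiL⟩ := hL
  rw [haall] at hiH hiL
  have hHmem : (Act.H, β) ∈ h 0 (tH + 1) := by
    rw [hrec]
    refine List.mem_append.2 (Or.inr ?_)
    rw [haall (1 - 0) tH, hiH]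
    simp [pay]
  have hLmem : (Act.L, γ) ∈ h 0 (tL + 1) := by
    rw [hrec]
    refine List.mem_append.2 (Or.inr ?_)
    rw [haall (1 - 0) tL, hiL]
    simp [pay]
  -- value computation
  have hval : ∀ (x : Act) (r : ℝ) (l : List (Act × ℝ)),
      (∀ p ∈ l, p = (Act.H, β) ∨ p = (Act.L, γ)) →
      ((x = Act.H ∧ r = β) ∨ (x = Act.L ∧ r = γ)) →
      (x, r) ∈ l → val x l = r := by
    intro x r l hl hxr hxl
    have hc : cnt x l ≠ 0 := by
      unfold cnt
      intro hc
      rw [List.length_eq_zero_iff] at hc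
      have : (x, r) ∈ l.filter (fun p => p.1 = x) := by
        rw [List.mem_filter]; exact ⟨hxl, by simp⟩
      rw [hc] at this; simp at this
    have htot : tot x l = r * (cnt x l : ℝ) := by
      unfold tot cnt
      have hconst : ∀ y ∈ (l.filter (fun p => p.1 = x)).map Prod.snd, y = r := by
        intro y hy
        simp only [List.mem_map] at hy
        obtain ⟨p, hp, hpy⟩ := hy
        rw [List.mem_filter] at hp
        obtain ⟨hp1, hp2⟩ := hp
        simp only [decide_eq_true_eq] at hp2
        rcases hl p hp1 with hpe | hpe <;> subst hpe <;>
          rcases hxr with ⟨hx, hr⟩ | ⟨hx, hr⟩ <;> subst hx <;> subst hr <;>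
          first
            | exact hpy.symm
            | exact Act.noConfusion hp2
      rw [List.sum_eq_card_nsmul _ r hconst]
      simp [mul_comm]
    unfold val
    rw [if_neg hc, htot]
    field_simp
  refine ⟨max (tH + 1) (tL + 1), ?_⟩
  intro t ht i
  have h0 : h i t = h 0 t := hall i t
  have hHm : (Act.H, β) ∈ h 0 t := hgrow _ _ (le_trans (le_max_left _ _) ht) _ hHmem
  have hLm : (Act.L, γ) ∈ h 0 t := hgrow _ _ (le_trans (le_max_right _ _) ht) _ hLmem
  have hvH : val Act.H (h 0 t) = β := hval _ _ _ (hmem t) (Or.inl ⟨rfl, rfl⟩) hHm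
  have hvL : val Act.L (h 0 t) = γ := hval _ _ _ (hmem t) (Or.inr ⟨rfl, rfl⟩) hLm
  rw [h0, hvH, hvL]
  exact ⟨rfl, rfl, hγβ⟩
end

section
/- Fix real numbers β and γ with 1 > β > γ > 0, and let δ be a real number with 0 < δ < e^{−γ²/2}. Then for every natural number n with n·β/(n+1) ≤ γ, it holds that n·β/(n+1) + √(2·ln(1/δ)/(n+1)) > γ. In particular (taking n = 0), √(2·ln(1/δ)) > γ. -/
/-- If `0 < δ < e^{−γ²/2}`, then for every `n` with `n·β/(n+1) ≤ γ`, the UCB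
index `n·β/(n+1) + √(2·ln(1/δ)/(n+1))` of action H (after `n` plays of H with
reward `β` and one play with reward 0) exceeds `γ`; in particular (taking
`n = 0`), `√(2·ln(1/δ)) > γ`. -/
theorem stmt9 (β γ δ : ℝ) (hβ1 : β < 1) (hγβ : γ < β) (hγ0 : 0 < γ)
    (hδ0 : 0 < δ) (hδ : δ < Real.exp (-γ ^ 2 / 2)) :
    (∀ n : ℕ, (n : ℝ) * β / ((n : ℝ) + 1) ≤ γ →
      (n : ℝ) * β / ((n : ℝ) + 1) +
        Real.sqrt (2 * Real.log (1 / δ) / ((n : ℝ) + 1)) > γ) ∧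
    Real.sqrt (2 * Real.log (1 / δ)) > γ := by
  have hL : γ ^ 2 < 2 * Real.log (1 / δ) := by
    have hlog : Real.log δ < -γ ^ 2 / 2 := by
      calc Real.log δ < Real.log (Real.exp (-γ ^ 2 / 2)) :=
            Real.log_lt_log hδ0 hδ
        _ = -γ ^ 2 / 2 := Real.log_exp _
    rw [one_div, Real.log_inv]
    linarith
  have hsq : Real.sqrt (2 * Real.log (1 / δ)) > γ := by
    rw [show γ = Real.sqrt (γ ^ 2) by rw [Real.sqrt_sq hγ0.le]]
    exact Real.sqrt_lt_sqrt (sq_nonneg γ) hL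
  refine ⟨fun n hn => ?_, hsq⟩
  have hn1 : (0 : ℝ) < (n : ℝ) + 1 := by positivity
  have hsn : Real.sqrt ((n : ℝ) + 1) ≤ (n : ℝ) + 1 := by
    nlinarith [Real.sq_sqrt hn1.le, Real.sqrt_nonneg ((n : ℝ) + 1),
      Real.sqrt_le_sqrt (show (1:ℝ) ≤ (n:ℝ)+1 by linarith), Real.sqrt_one]
  have hsn0 : (0 : ℝ) < Real.sqrt ((n : ℝ) + 1) := Real.sqrt_pos.mpr hn1
  have hsplit : Real.sqrt (2 * Real.log (1 / δ) / ((n : ℝ) + 1)) =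
      Real.sqrt (2 * Real.log (1 / δ)) / Real.sqrt ((n : ℝ) + 1) :=
    Real.sqrt_div (by nlinarith [sq_nonneg γ]) _
  rw [hsplit]
  -- gap : γ - n*β/(n+1) ≤ γ/(n+1)
  have hgap : γ - (n : ℝ) * β / ((n : ℝ) + 1) ≤ γ / ((n : ℝ) + 1) := by
    rw [sub_le_iff_le_add, ← add_div, le_div_iff₀ hn1]
    nlinarith [Nat.cast_nonneg (α := ℝ) n]
  have h1 : γ / ((n : ℝ) + 1) ≤ γ / Real.sqrt ((n : ℝ) + 1) :=
    div_le_div_of_nonneg_left hγ0.le hsn0 hsn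
  have h2 : γ / Real.sqrt ((n : ℝ) + 1) <
      Real.sqrt (2 * Real.log (1 / δ)) / Real.sqrt ((n : ℝ) + 1) := by
    gcongr
  linarith
end

section
/- Let (X_n)_{n∈ℕ} and (Y_n)_{n∈ℕ} be mutually independent sequences of random variables on a probability space, with the X_n i.i.d. Bernoulli(p) for some p ∈ [0,1) and the Y_n i.i.d. Bernoulli(q) for some q ∈ [0,1]. Fix real numbers γ ∈ (0,1), c ≥ 0, d ≥ 0. Then almost surely, as n → ∞, (c + Σ_{i<n} (1−X_i)·Y_i + γ·(d + Σ_{i<n} (1−X_i)·(1−Y_i)))/(c + d + Σ_{i<n} (1−X_i)) → q + γ·(1−q). (This is the almost-sure limit of player 0's value estimate of L when player 0 plays L in round i iff X_i = 0 and player 1 plays H in round i iff Y_i = 1, starting from c prior (L,H) outcomes and d prior (L,L) outcomes.) -/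
open MeasureTheory ProbabilityTheory Filter

section aux

variable {Ω : Type*} [MeasurableSpace Ω] {μ : Measure Ω} [IsProbabilityMeasure μ]

open scoped Classical in
lemma bern_map (Z : Ω → ℝ) (hZ : Measurable Z) (h01 : ∀ ω, Z ω = 0 ∨ Z ω = 1) (s : Set ℝ) :
    μ (Z ⁻¹' s) = (if (1:ℝ) ∈ s then μ {ω | Z ω = 1} else 0) +
      (if (0:ℝ) ∈ s then 1 - μ {ω | Z ω = 1} else 0) := by
  classical
  set A := {ω | Z ω = 1} with hAdef
  have hA : MeasurableSet A := hZ (measurableSet_singleton 1)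
  have hsplit : μ (Z ⁻¹' s ∩ A) + μ (Z ⁻¹' s \ A) = μ (Z ⁻¹' s) :=
    measure_inter_add_diff _ hA
  have h1 : Z ⁻¹' s ∩ A = if (1:ℝ) ∈ s then A else ∅ := by
    split_ifs with h
    · ext ω; simp only [Set.mem_inter_iff, Set.mem_preimage, hAdef, Set.mem_setOf_eq]
      exact ⟨fun hh => hh.2, fun hh => ⟨hh ▸ h, hh⟩⟩
    · ext ω; simp only [Set.mem_inter_iff, Set.mem_preimage, hAdef, Set.mem_setOf_eq,
        Set.mem_empty_iff_false, iff_false]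
      rintro ⟨hs, h1⟩; exact h (h1 ▸ hs)
  have h0 : Z ⁻¹' s \ A = if (0:ℝ) ∈ s then Aᶜ else ∅ := by
    have hAc : ∀ ω, ω ∉ A ↔ Z ω = 0 := by
      intro ω; rcases h01 ω with h | h <;> simp [hAdef, h]
    split_ifs with h
    · ext ω
      rw [Set.mem_diff, Set.mem_compl_iff, hAc ω]
      constructor
      · rintro ⟨_, hA1⟩; exact hA1
      · intro hh
        exact ⟨by simpa [hh] using h, hh⟩
    · ext ω
      rw [Set.mem_diff, hAc ω]
      simp only [Set.mem_preimage, Set.mem_empty_iff_false, iff_false]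
      rintro ⟨hs, hh⟩; exact h (hh ▸ hs)
  have hcompl : μ Aᶜ = 1 - μ A := by
    rw [measure_compl hA (measure_ne_top μ A), measure_univ]
  rw [← hsplit, h1, h0]
  split_ifs <;> simp [hcompl]

lemma bern_ident (Z W : Ω → ℝ) (hZ : Measurable Z) (hW : Measurable W)
    (hZ01 : ∀ ω, Z ω = 0 ∨ Z ω = 1) (hW01 : ∀ ω, W ω = 0 ∨ W ω = 1)
    (heq : μ {ω | Z ω = 1} = μ {ω | W ω = 1}) :
    IdentDistrib Z W μ μ := by
  refine ⟨hZ.aemeasurable, hW.aemeasurable, Measure.ext fun s hs => ?_⟩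
  rw [Measure.map_apply hZ hs, Measure.map_apply hW hs, bern_map Z hZ hZ01 s,
    bern_map W hW hW01 s, heq]

lemma pair_ident {A B A' B' : Ω → ℝ} (hA : Measurable A) (hB : Measurable B)
    (hA' : Measurable A') (hB' : Measurable B')
    (iAB : IndepFun A B μ) (iA'B' : IndepFun A' B' μ)
    (idA : IdentDistrib A A' μ μ) (idB : IdentDistrib B B' μ μ) :
    IdentDistrib (fun ω => (A ω, B ω)) (fun ω => (A' ω, B' ω)) μ μ := by
  refine ⟨(hA.prodMk hB).aemeasurable, (hA'.prodMk hB').aemeasurable, ?_⟩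
  rw [(indepFun_iff_map_prod_eq_prod_map_map hA.aemeasurable hB.aemeasurable).1 iAB,
    (indepFun_iff_map_prod_eq_prod_map_map hA'.aemeasurable hB'.aemeasurable).1 iA'B',
    idA.map_eq, idB.map_eq]

lemma bern_integral (Z : Ω → ℝ) (hZ : Measurable Z) (h01 : ∀ ω, Z ω = 0 ∨ Z ω = 1) :
    ∫ ω, Z ω ∂μ = (μ {ω | Z ω = 1}).toReal := by
  have hA : MeasurableSet {ω | Z ω = 1} := hZ (measurableSet_singleton 1)
  have hind : Z = Set.indicator {ω | Z ω = 1} (fun _ => (1:ℝ)) := by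
    funext ω
    rcases h01 ω with h | h <;> simp [Set.indicator_apply, Set.mem_setOf_eq, h]
  conv_lhs => rw [hind]
  rw [integral_indicator_const (1:ℝ) hA, smul_eq_mul, mul_one, measureReal_def]

lemma bern_integrable (Z : Ω → ℝ) (hZ : Measurable Z) (h01 : ∀ ω, Z ω = 0 ∨ Z ω = 1) :
    Integrable Z μ := by
  refine (integrable_const (1:ℝ)).mono' hZ.aestronglyMeasurable (ae_of_all _ fun ω => ?_)
  rcases h01 ω with h | h <;> simp [h]

end aux

/-- Almost-sure limit of player 0's value estimate of L under epsilon-greedy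
play in a fixed regime: if `(X_n)` and `(Y_n)` are mutually independent
sequences, with the `X_n` i.i.d. Bernoulli(`p`), `p ∈ [0,1)`, and the `Y_n`
i.i.d. Bernoulli(`q`), `q ∈ [0,1]`, then for `γ ∈ (0,1)`, almost surely
`(c + Σ_{i<n}(1−X_i)Y_i + γ·(d + Σ_{i<n}(1−X_i)(1−Y_i)))/(c + d + Σ_{i<n}(1−X_i))
→ q + γ·(1−q)` as `n → ∞`. -/
theorem stmt12 {Ω : Type*} [MeasurableSpace Ω] (μ : Measure Ω) [IsProbabilityMeasure μ]
    (X Y : ℕ → Ω → ℝ) (p q : ℝ) (hp0 : 0 ≤ p) (hp1 : p < 1) (hq0 : 0 ≤ q) (hq1 : q ≤ 1)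
    (hXmeas : ∀ n, Measurable (X n)) (hYmeas : ∀ n, Measurable (Y n))
    (hX01 : ∀ n ω, X n ω = 0 ∨ X n ω = 1) (hY01 : ∀ n ω, Y n ω = 0 ∨ Y n ω = 1)
    (hXp : ∀ n, μ {ω | X n ω = 1} = ENNReal.ofReal p)
    (hYq : ∀ n, μ {ω | Y n ω = 1} = ENNReal.ofReal q)
    (hindep : iIndepFun (Sum.elim X Y) μ)
    (γ c d : ℝ) (hγ0 : 0 < γ) (hγ1 : γ < 1) (hc : 0 ≤ c) (hd : 0 ≤ d) :
    ∀ᵐ ω ∂μ, Tendsto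
      (fun n : ℕ =>
        (c + ∑ i ∈ Finset.range n, (1 - X i ω) * Y i ω +
            γ * (d + ∑ i ∈ Finset.range n, (1 - X i ω) * (1 - Y i ω))) /
          (c + d + ∑ i ∈ Finset.range n, (1 - X i ω)))
      atTop (nhds (q + γ * (1 - q))) := by
  set f : ℕ → Ω → ℝ := fun i ω => (1 - X i ω) * Y i ω with hfdef
  set g : ℕ → Ω → ℝ := fun i ω => (1 - X i ω) * (1 - Y i ω) with hgdef
  have hφ : Measurable (fun z : ℝ × ℝ => (1 - z.1) * z.2) := by fun_prop
  have hψ : Measurable (fun z : ℝ × ℝ => (1 - z.1) * (1 - z.2)) := by fun_prop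
  have hmeasS : ∀ k : ℕ ⊕ ℕ, Measurable (Sum.elim X Y k) := by
    rintro (i | i)
    · exact hXmeas i
    · exact hYmeas i
  have hpair_indep : ∀ i j : ℕ, i ≠ j →
      IndepFun (fun ω => (X i ω, Y i ω)) (fun ω => (X j ω, Y j ω)) μ := by
    intro i j hij
    exact hindep.indepFun_prodMk_prodMk hmeasS (.inl i) (.inr i) (.inl j) (.inr j)
      (by simp [hij]) (by simp) (by simp) (by simp [hij])
  have hXYi : ∀ i, IndepFun (X i) (Y i) μ := fun i =>
    hindep.indepFun (show (Sum.inl i : ℕ ⊕ ℕ) ≠ Sum.inr i by simp)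
  have hidX : ∀ i, IdentDistrib (X i) (X 0) μ μ := fun i =>
    bern_ident _ _ (hXmeas i) (hXmeas 0) (hX01 i) (hX01 0) (by rw [hXp i, hXp 0])
  have hidY : ∀ i, IdentDistrib (Y i) (Y 0) μ μ := fun i =>
    bern_ident _ _ (hYmeas i) (hYmeas 0) (hY01 i) (hY01 0) (by rw [hYq i, hYq 0])
  have hidpair : ∀ i, IdentDistrib (fun ω => (X i ω, Y i ω)) (fun ω => (X 0 ω, Y 0 ω)) μ μ :=
    fun i => pair_ident (hXmeas i) (hYmeas i) (hXmeas 0) (hYmeas 0) (hXYi i) (hXYi 0)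
      (hidX i) (hidY i)
  have hf_meas : ∀ i, Measurable (f i) := fun i =>
    (measurable_const.sub (hXmeas i)).mul (hYmeas i)
  have hg_meas : ∀ i, Measurable (g i) := fun i =>
    (measurable_const.sub (hXmeas i)).mul (measurable_const.sub (hYmeas i))
  have hf01 : ∀ i ω, f i ω = 0 ∨ f i ω = 1 := by
    intro i ω
    rcases hX01 i ω with h | h <;> rcases hY01 i ω with h' | h' <;> simp [hfdef, h, h']
  have hg01 : ∀ i ω, g i ω = 0 ∨ g i ω = 1 := by
    intro i ω
    rcases hX01 i ω with h | h <;> rcases hY01 i ω with h' | h' <;> simp [hgdef, h, h']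
  have hf_indep : Pairwise (Function.onFun (IndepFun · · μ) f) := fun i j hij =>
    (hpair_indep i j hij).comp hφ hφ
  have hg_indep : Pairwise (Function.onFun (IndepFun · · μ) g) := fun i j hij =>
    (hpair_indep i j hij).comp hψ hψ
  have hf_ident : ∀ i, IdentDistrib (f i) (f 0) μ μ := fun i => (hidpair i).comp hφ
  have hg_ident : ∀ i, IdentDistrib (g i) (g 0) μ μ := fun i => (hidpair i).comp hψ
  have hf_int : Integrable (f 0) μ := bern_integrable _ (hf_meas 0) (hf01 0)
  have hg_int : Integrable (g 0) μ := bern_integrable _ (hg_meas 0) (hg01 0)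
  -- integrals
  have hintX : ∫ ω, X 0 ω ∂μ = p := by
    rw [bern_integral _ (hXmeas 0) (hX01 0), hXp 0, ENNReal.toReal_ofReal hp0]
  have hintY : ∫ ω, Y 0 ω ∂μ = q := by
    rw [bern_integral _ (hYmeas 0) (hY01 0), hYq 0, ENNReal.toReal_ofReal hq0]
  have hint1X : ∫ ω, (1 - X 0 ω) ∂μ = 1 - p := by
    rw [integral_sub (integrable_const 1) (bern_integrable _ (hXmeas 0) (hX01 0)), hintX]
    simp
  have hint1Y : ∫ ω, (1 - Y 0 ω) ∂μ = 1 - q := by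
    rw [integral_sub (integrable_const 1) (bern_integrable _ (hYmeas 0) (hY01 0)), hintY]
    simp
  have hEf : ∫ ω, f 0 ω ∂μ = (1 - p) * q := by
    have hi : IndepFun (fun ω => 1 - X 0 ω) (Y 0) μ :=
      (hXYi 0).comp (measurable_const.sub measurable_id) measurable_id
    rw [show (fun ω => f 0 ω) = (fun ω => (1 - X 0 ω) * Y 0 ω) from rfl,
      hi.integral_fun_mul_eq_mul_integral (measurable_const.sub (hXmeas 0)).aestronglyMeasurable
        (hYmeas 0).aestronglyMeasurable, hint1X, hintY]
  have hEg : ∫ ω, g 0 ω ∂μ = (1 - p) * (1 - q) := by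
    have hi : IndepFun (fun ω => 1 - X 0 ω) (fun ω => 1 - Y 0 ω) μ :=
      (hXYi 0).comp (measurable_const.sub measurable_id) (measurable_const.sub measurable_id)
    rw [show (fun ω => g 0 ω) = (fun ω => (1 - X 0 ω) * (1 - Y 0 ω)) from rfl,
      hi.integral_fun_mul_eq_mul_integral (measurable_const.sub (hXmeas 0)).aestronglyMeasurable
        (measurable_const.sub (hYmeas 0)).aestronglyMeasurable, hint1X, hint1Y]
  have hslln_f := strong_law_ae_real f hf_int hf_indep hf_ident
  have hslln_g := strong_law_ae_real g hg_int hg_indep hg_ident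
  rw [show μ[f 0] = (1 - p) * q from hEf] at hslln_f
  rw [show μ[g 0] = (1 - p) * (1 - q) from hEg] at hslln_g
  filter_upwards [hslln_f, hslln_g] with ω h1 h2
  have hsum : ∀ n, ∑ i ∈ Finset.range n, (1 - X i ω) =
      (∑ i ∈ Finset.range n, f i ω) + ∑ i ∈ Finset.range n, g i ω := by
    intro n
    rw [← Finset.sum_add_distrib]
    refine Finset.sum_congr rfl fun i _ => ?_
    simp only [hfdef, hgdef]; ring
  have h0c : Tendsto (fun n : ℕ => c / (n:ℝ)) atTop (nhds 0) :=
    tendsto_const_div_atTop_nhds_zero_nat c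
  have h0d : Tendsto (fun n : ℕ => d / (n:ℝ)) atTop (nhds 0) :=
    tendsto_const_div_atTop_nhds_zero_nat d
  have hnum : Tendsto
      (fun n : ℕ => (c + ∑ i ∈ Finset.range n, f i ω +
        γ * (d + ∑ i ∈ Finset.range n, g i ω)) / (n:ℝ)) atTop
      (nhds (0 + (1 - p) * q + γ * (0 + (1 - p) * (1 - q)))) := by
    refine Tendsto.congr (fun n => ?_) (((h0c.add h1).add ((h0d.add h2).const_mul γ)))
    rw [add_div, add_div, mul_div_assoc, add_div]
  have hden : Tendsto
      (fun n : ℕ => (c + d + ∑ i ∈ Finset.range n, (1 - X i ω)) / (n:ℝ)) atTop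
      (nhds (0 + 0 + ((1 - p) * q + (1 - p) * (1 - q)))) := by
    refine Tendsto.congr (fun n => ?_) ((h0c.add h0d).add (h1.add h2))
    rw [hsum n, add_div, add_div, add_div]
  have hden_ne : (0:ℝ) + 0 + ((1 - p) * q + (1 - p) * (1 - q)) ≠ 0 := by
    have : (0:ℝ) + 0 + ((1 - p) * q + (1 - p) * (1 - q)) = 1 - p := by ring
    rw [this]; linarith
  have hdiv := hnum.div hden hden_ne
  have hlim : (0 + (1 - p) * q + γ * (0 + (1 - p) * (1 - q))) /
      ((0:ℝ) + 0 + ((1 - p) * q + (1 - p) * (1 - q))) = q + γ * (1 - q) := by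
    have hp : (1:ℝ) - p ≠ 0 := by linarith
    rw [show (0:ℝ) + (1 - p) * q + γ * (0 + (1 - p) * (1 - q)) =
      (1 - p) * (q + γ * (1 - q)) by ring,
      show (0:ℝ) + 0 + ((1 - p) * q + (1 - p) * (1 - q)) = 1 - p by ring,
      mul_div_cancel_left₀ _ hp]
  rw [hlim] at hdiv
  refine hdiv.congr' ?_
  filter_upwards [eventually_ge_atTop 1] with n hn
  have hn' : ((n:ℝ)) ≠ 0 := Nat.cast_ne_zero.2 (by omega)
  simp only [Pi.div_apply]
  exact div_div_div_cancel_right₀ hn' _ _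
end

section
/- Fix real numbers β and γ with 1 > β > γ > 0 and ε_0, ε_1 ∈ (0,1). Consider the stochastic process in which two players repeatedly play the Prisoner's Dilemma, each player i using the epsilon-greedy bandit algorithm with parameter ε_i: at each round, independently of everything else, with probability 1 − ε_i player i plays the action with the strictly maximal empirical-mean value estimate from its own history (with unplayed actions valued 0, and ties broken by a fixed rule), and with probability ε_i plays an action uniformly at random; the round's rewards are the Prisoner's Dilemma payoffs of the joint action and each player updates its own history. Then almost surely the players never learn to collude: with probability 1, there is no time T such that for all t ≥ T both players' value estimates satisfy v_i(H, t) > v_i(L, t); equivalently, almost surely, for every T there exists t ≥ T at which some player's value estimate of H does not exceed its value estimate of L. -/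
open MeasureTheory ProbabilityTheory Filter

open scoped Topology Classical ENNReal

lemma cnt_append (x b : Act) (r : ℝ) (l : List (Act × ℝ)) :
    cnt x (l ++ [(b, r)]) = cnt x l + (if b = x then 1 else 0) := by
  by_cases hb : b = x <;> simp [cnt, List.filter_append, hb]

lemma tot_append (x b : Act) (r : ℝ) (l : List (Act × ℝ)) :
    tot x (l ++ [(b, r)]) = tot x l + (if b = x then r else 0) := by
  by_cases hb : b = x <;> simp [tot, List.filter_append, hb]

lemma lln_aux {Ω : Type*} [MeasurableSpace Ω] (μ : Measure Ω) [IsProbabilityMeasure μ]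
    (U : Fin 2 → ℕ → Ω → ℝ)
    (hUmeas : ∀ i t, Measurable (U i t))
    (hUunif : ∀ i t, Measure.map (U i t) μ = volume.restrict (Set.Icc (0 : ℝ) 1))
    (hUindep : iIndepFun
      (fun p : Fin 2 × ℕ => U p.1 p.2) μ)
    (S : Set (ℝ × ℝ)) (hS : MeasurableSet S) :
    ∀ᵐ ω ∂μ, Filter.Tendsto
      (fun n : ℕ => (∑ t ∈ Finset.range n,
        (if (U 0 t ω, U 1 t ω) ∈ S then (1:ℝ) else 0)) / n) atTop
      (𝓝 (((volume.restrict (Set.Icc (0:ℝ) 1)).prod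
            (volume.restrict (Set.Icc (0:ℝ) 1))) S).toReal) := by
  set ν := volume.restrict (Set.Icc (0:ℝ) 1) with hνdef
  set g : ℝ × ℝ → ℝ := S.indicator 1 with hg
  have hgm : Measurable g := measurable_const.indicator hS
  set pr : ℕ → Ω → ℝ × ℝ := fun t ω => (U 0 t ω, U 1 t ω) with hpr
  have hprm : ∀ t, Measurable (pr t) := fun t => (hUmeas 0 t).prodMk (hUmeas 1 t)
  have hlaw : ∀ t, Measure.map (pr t) μ = ν.prod ν := by
    intro t
    have hind : IndepFun (U 0 t) (U 1 t) μ :=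
      hUindep.indepFun (show ((0 : Fin 2), t) ≠ (1, t) by simp)
    rw [show Measure.map (pr t) μ = μ.map (fun ω => (U 0 t ω, U 1 t ω)) from rfl,
      (indepFun_iff_map_prod_eq_prod_map_map (hUmeas 0 t).aemeasurable
        (hUmeas 1 t).aemeasurable).mp hind, hUunif, hUunif]
  set X : ℕ → Ω → ℝ := fun t ω => g (pr t ω) with hX
  have hint : Integrable (X 0) μ := by
    have hXi : X 0 = (pr 0 ⁻¹' S).indicator (fun _ => (1:ℝ)) := by
      ext ω; by_cases hmem : pr 0 ω ∈ S <;>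
        simp [hX, hg, Set.indicator_apply, hmem]
    rw [hXi]
    exact (integrable_const (1:ℝ)).indicator ((hprm 0) hS)
  have hindep : Pairwise (Function.onFun (IndepFun · · μ) X) := by
    intro s t hst
    have h2 : IndepFun (pr s) (pr t) μ := by
      apply hUindep.indepFun_prodMk_prodMk (fun p => hUmeas p.1 p.2)
        (0, s) (1, s) (0, t) (1, t) <;> simp [hst]
    exact h2.comp hgm hgm
  have hident : ∀ t, IdentDistrib (X t) (X 0) μ μ := by
    intro t
    have hpid : IdentDistrib (pr t) (pr 0) μ μ :=
      ⟨(hprm t).aemeasurable, (hprm 0).aemeasurable, by rw [hlaw, hlaw]⟩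
    exact hpid.comp hgm
  have hmean : (∫ ω, X 0 ω ∂μ) = ((ν.prod ν) S).toReal := by
    rw [show (∫ ω, X 0 ω ∂μ) = ∫ ω, g (pr 0 ω) ∂μ from rfl,
      ← integral_map (hprm 0).aemeasurable hgm.aestronglyMeasurable, hlaw, hg,
      integral_indicator_one hS, measureReal_def]
  have := strong_law_ae_real X hint hindep hident
  rw [hmean] at this
  filter_upwards [this] with ω hω
  refine hω.congr fun n => ?_
  rfl


/-- Proposition 3 of the paper: two epsilon-greedy bandits with parameters
`ε_0, ε_1 ∈ (0,1)` playing the repeated Prisoner's Dilemma almost surely never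
learn to collude. The exploration randomness is modeled by mutually
independent random seeds `U i t`, uniform on `[0,1]`: with probability
`ε i` (when `U i t < ε i`) player `i` plays an action uniformly at random
(H when `U i t < ε i / 2`, L otherwise), and with probability `1 − ε i` it
plays the action with the strictly maximal value estimate (ties broken by the
fixed rule `tie`). Almost surely, for every time `T` there is a time `t ≥ T`
at which some player's value estimate of H does not exceed its value estimate
of L. -/
theorem stmt14 {Ω : Type*} [MeasurableSpace Ω] (μ : Measure Ω) [IsProbabilityMeasure μ]
    (β γ : ℝ) (hβ1 : β < 1) (hγβ : γ < β) (hγ0 : 0 < γ)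
    (ε : Fin 2 → ℝ) (hε0 : ∀ i, 0 < ε i) (hε1 : ∀ i, ε i < 1)
    (U : Fin 2 → ℕ → Ω → ℝ)
    (hUmeas : ∀ i t, Measurable (U i t))
    (hUunif : ∀ i t, Measure.map (U i t) μ = volume.restrict (Set.Icc (0 : ℝ) 1))
    (hUindep : iIndepFun
      (fun p : Fin 2 × ℕ => U p.1 p.2) μ)
    (tie : Fin 2 → List (Act × ℝ) → Act)
    (a : Fin 2 → ℕ → Ω → Act) (h : Fin 2 → ℕ → Ω → List (Act × ℝ))
    (hinit : ∀ (i : Fin 2) (ω : Ω), h i 0 ω = [])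
    (hrec : ∀ (i : Fin 2) (t : ℕ) (ω : Ω),
      h i (t + 1) ω = h i t ω ++ [(a i t ω, pay β γ (a i t ω) (a (1 - i) t ω))])
    (haction : ∀ (i : Fin 2) (t : ℕ) (ω : Ω),
      a i t ω =
        if U i t ω < ε i then
          (if U i t ω < ε i / 2 then Act.H else Act.L)
        else if val Act.H (h i t ω) > val Act.L (h i t ω) then Act.H
        else if val Act.L (h i t ω) > val Act.H (h i t ω) then Act.L
        else tie i (h i t ω)) :
    ∀ᵐ ω ∂μ, ∀ T : ℕ, ∃ t : ℕ, T ≤ t ∧ ∃ i : Fin 2,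
      ¬ val Act.H (h i t ω) > val Act.L (h i t ω) := by
  classical
  set ν := volume.restrict (Set.Icc (0:ℝ) 1) with hνdef
  haveI : IsProbabilityMeasure ν := ⟨by
    rw [hνdef, Measure.restrict_apply MeasurableSet.univ, Set.univ_inter, Real.volume_Icc]
    norm_num⟩
  set q0 : ℝ := ε 0 / 2 with hq0def
  set q1 : ℝ := ε 1 / 2 with hq1def
  have hq0pos : 0 < q0 := by have := hε0 0; rw [hq0def]; linarith
  have hq1pos : 0 < q1 := by have := hε0 1; rw [hq1def]; linarith
  have hq0lt : q0 < 1 := by have := hε1 0; have := hε0 0; rw [hq0def]; linarith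
  have hq1lt : q1 < 1 := by have := hε1 1; have := hε0 1; rw [hq1def]; linarith
  set I0 : Set ℝ := Set.Ico (ε 0 / 2) (ε 0) with hI0def
  set I1 : Set ℝ := Set.Ico (ε 1 / 2) (ε 1) with hI1def
  have hνI : ∀ i : Fin 2, ν (Set.Ico (ε i / 2) (ε i)) = ENNReal.ofReal (ε i / 2) := by
    intro i
    rw [hνdef, Measure.restrict_apply measurableSet_Ico,
      Set.inter_eq_self_of_subset_left, Real.volume_Ico]
    · congr 1; ring
    · intro x hx
      have h1 := hε0 i; have h2 := hε1 i
      constructor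
      · rcases hx with ⟨hx1, _⟩; linarith
      · rcases hx with ⟨_, hx2⟩; linarith
  have hνIc : ∀ i : Fin 2, ν (Set.Ico (ε i / 2) (ε i))ᶜ = 1 - ENNReal.ofReal (ε i / 2) := by
    intro i
    rw [measure_compl measurableSet_Ico (measure_ne_top _ _), hνI, measure_univ]
  set SA : Set (ℝ × ℝ) := Set.univ ×ˢ I1 with hSAdef
  set SAB : Set (ℝ × ℝ) := I0 ×ˢ I1 with hSABdef
  set SC : Set (ℝ × ℝ) := I0ᶜ ×ˢ I1ᶜ with hSCdef
  have hSAm : MeasurableSet SA := MeasurableSet.univ.prod measurableSet_Ico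
  have hSABm : MeasurableSet SAB := measurableSet_Ico.prod measurableSet_Ico
  have hSCm : MeasurableSet SC :=
    measurableSet_Ico.compl.prod measurableSet_Ico.compl
  have hofq0 : (ENNReal.ofReal q0).toReal = q0 := ENNReal.toReal_ofReal hq0pos.le
  have hofq1 : (ENNReal.ofReal q1).toReal = q1 := ENNReal.toReal_ofReal hq1pos.le
  have hcompl_toReal : ∀ q : ℝ, 0 ≤ q → q ≤ 1 →
      ((1 : ℝ≥0∞) - ENNReal.ofReal q).toReal = 1 - q := by
    intro q hq0 hq1
    rw [ENNReal.toReal_sub_of_le (ENNReal.ofReal_le_one.mpr hq1) ENNReal.one_ne_top,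
      ENNReal.toReal_one, ENNReal.toReal_ofReal hq0]
  have mA : ((ν.prod ν) SA).toReal = q1 := by
    rw [hSAdef, Measure.prod_prod, measure_univ, one_mul, hI1def, hνI 1, hofq1]
  have mAB : ((ν.prod ν) SAB).toReal = q0 * q1 := by
    rw [hSABdef, Measure.prod_prod, hI0def, hI1def, hνI 0, hνI 1, ENNReal.toReal_mul,
      hofq0, hofq1]
  have mC : ((ν.prod ν) SC).toReal = (1 - q0) * (1 - q1) := by
    rw [hSCdef, Measure.prod_prod, hI0def, hI1def, hνIc 0, hνIc 1, ENNReal.toReal_mul,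
      hcompl_toReal q0 hq0pos.le hq0lt.le, hcompl_toReal q1 hq1pos.le hq1lt.le]
  have LA := lln_aux μ U hUmeas hUunif hUindep SA hSAm
  have LAB := lln_aux μ U hUmeas hUunif hUindep SAB hSABm
  have LC := lln_aux μ U hUmeas hUunif hUindep SC hSCm
  rw [show ((volume.restrict (Set.Icc (0:ℝ) 1)).prod (volume.restrict (Set.Icc (0:ℝ) 1)))
    = ν.prod ν from rfl] at LA LAB LC
  rw [mA] at LA
  rw [mAB] at LAB
  rw [mC] at LC
  filter_upwards [LA, LAB, LC] with ω hA hAB hC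
  intro T
  by_contra hcon
  push_neg at hcon
  -- hcon : ∀ t, T ≤ t → ∀ i, val H > val L
  set fA : ℕ → ℝ := fun t => if (U 0 t ω, U 1 t ω) ∈ SA then 1 else 0 with hfAdef
  set fAB : ℕ → ℝ := fun t => if (U 0 t ω, U 1 t ω) ∈ SAB then 1 else 0 with hfABdef
  set fC : ℕ → ℝ := fun t => if (U 0 t ω, U 1 t ω) ∈ SC then 1 else 0 with hfCdef
  have hact : ∀ (i : Fin 2) (t : ℕ), T ≤ t →
      a i t ω = (if U i t ω ∈ Set.Ico (ε i / 2) (ε i) then Act.L else Act.H) := by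
    intro i t ht
    have hg := hcon t ht i
    rw [haction]
    by_cases h1 : U i t ω < ε i
    · by_cases h2 : U i t ω < ε i / 2
      · rw [if_pos h1, if_pos h2, if_neg]
        intro hm
        exact absurd hm.1 (not_le.mpr h2)
      · rw [if_pos h1, if_neg h2, if_pos ⟨not_lt.mp h2, h1⟩]
    · rw [if_neg h1, if_pos hg, if_neg]
      intro hm
      exact h1 hm.2
  have h10 : (1 : Fin 2) - 1 = 0 := by decide
  have key : ∀ n, T ≤ n →
      ((cnt Act.L (h 1 n ω) : ℝ) = (cnt Act.L (h 1 T ω) : ℝ) + ∑ t ∈ Finset.Ico T n, fA t)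
    ∧ (tot Act.L (h 1 n ω) = tot Act.L (h 1 T ω)
        + ∑ t ∈ Finset.Ico T n, (fA t - fAB t + γ * fAB t))
    ∧ ((cnt Act.H (h 1 n ω) : ℝ) = (cnt Act.H (h 1 T ω) : ℝ)
        + ∑ t ∈ Finset.Ico T n, (1 - fA t))
    ∧ (tot Act.H (h 1 n ω) = tot Act.H (h 1 T ω) + ∑ t ∈ Finset.Ico T n, β * fC t) := by
    intro n hn
    induction n, hn using Nat.le_induction with
    | base => simp
    | succ n hn ih =>
      obtain ⟨e1, e2, e3, e4⟩ := ih
      have hrec1 := hrec 1 n ω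
      rw [h10] at hrec1
      have ha1 := hact 1 n hn
      have ha0 := hact 0 n hn
      have hfA : fA n = if U 1 n ω ∈ I1 then 1 else 0 := by
        simp [hfAdef, hSAdef, Set.mem_prod]
      have hfAB : fAB n = if U 0 n ω ∈ I0 ∧ U 1 n ω ∈ I1 then 1 else 0 := by
        simp [hfABdef, hSABdef, Set.mem_prod]
      have hfC : fC n = if U 0 n ω ∉ I0 ∧ U 1 n ω ∉ I1 then 1 else 0 := by
        simp [hfCdef, hSCdef, Set.mem_prod]
      simp only [← hI0def] at ha0
      simp only [← hI1def] at ha1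
      have hstepL : (cnt Act.L (h 1 (n+1) ω) : ℝ)
          = (cnt Act.L (h 1 n ω) : ℝ) + (if a 1 n ω = Act.L then 1 else 0) := by
        rw [hrec1, cnt_append]; split_ifs <;> push_cast <;> ring
      have hstepH : (cnt Act.H (h 1 (n+1) ω) : ℝ)
          = (cnt Act.H (h 1 n ω) : ℝ) + (if a 1 n ω = Act.H then 1 else 0) := by
        rw [hrec1, cnt_append]; split_ifs <;> push_cast <;> ring
      have hsteptL : tot Act.L (h 1 (n+1) ω)
          = tot Act.L (h 1 n ω) + (if a 1 n ω = Act.L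
              then pay β γ (a 1 n ω) (a 0 n ω) else 0) := by
        rw [hrec1, tot_append]
      have hsteptH : tot Act.H (h 1 (n+1) ω)
          = tot Act.H (h 1 n ω) + (if a 1 n ω = Act.H
              then pay β γ (a 1 n ω) (a 0 n ω) else 0) := by
        rw [hrec1, tot_append]
      refine ⟨?_, ?_, ?_, ?_⟩
      · rw [hstepL, e1, Finset.sum_Ico_succ_top hn]
        have : (if a 1 n ω = Act.L then (1:ℝ) else 0) = fA n := by
          rw [ha1, hfA]; by_cases hu1 : U 1 n ω ∈ I1 <;> simp [hu1]
        rw [this]; ring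
      · rw [hsteptL, e2, Finset.sum_Ico_succ_top hn]
        have : (if a 1 n ω = Act.L then pay β γ (a 1 n ω) (a 0 n ω) else 0)
            = fA n - fAB n + γ * fAB n := by
          rw [ha1, ha0, hfA, hfAB]
          by_cases hu1 : U 1 n ω ∈ I1 <;> by_cases hu0 : U 0 n ω ∈ I0 <;>
            simp [hu1, hu0, pay]
        rw [this]; ring
      · rw [hstepH, e3, Finset.sum_Ico_succ_top hn]
        have : (if a 1 n ω = Act.H then (1:ℝ) else 0) = 1 - fA n := by
          rw [ha1, hfA]; by_cases hu1 : U 1 n ω ∈ I1 <;> simp [hu1]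
        rw [this]; ring
      · rw [hsteptH, e4, Finset.sum_Ico_succ_top hn]
        have : (if a 1 n ω = Act.H then pay β γ (a 1 n ω) (a 0 n ω) else 0)
            = β * fC n := by
          rw [ha1, ha0, hfC]
          by_cases hu1 : U 1 n ω ∈ I1 <;> by_cases hu0 : U 0 n ω ∈ I0 <;>
            simp [hu1, hu0, pay]
        rw [this]; ring
  -- shift helper
  have hTend : ∀ (f : ℕ → ℝ) (c ℓ : ℝ),
      Tendsto (fun n : ℕ => (∑ t ∈ Finset.range n, f t) / n) atTop (𝓝 ℓ) →
      Tendsto (fun n : ℕ => (c + ∑ t ∈ Finset.Ico T n, f t) / n) atTop (𝓝 ℓ) := by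
    intro f c ℓ hf
    have h0 : Tendsto (fun n : ℕ => (c - ∑ t ∈ Finset.range T, f t) / n
        + (∑ t ∈ Finset.range n, f t) / n) atTop (𝓝 (0 + ℓ)) :=
      (tendsto_const_div_atTop_nhds_zero_nat _).add hf
    rw [zero_add] at h0
    refine h0.congr' ?_
    filter_upwards [eventually_ge_atTop T] with n hn
    rw [Finset.sum_Ico_eq_sub f hn]
    ring
  have inst_irrel : ∀ (p : Prop) (i1 i2 : Decidable p) (x y : ℝ),
      @ite ℝ p i1 x y = @ite ℝ p i2 x y := fun p i1 i2 x y => by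
    cases Subsingleton.elim i1 i2; rfl
  have hA' : Tendsto (fun n : ℕ => (∑ t ∈ Finset.range n, fA t) / n) atTop (𝓝 q1) := by
    refine hA.congr fun n => ?_
    simp only [hfAdef]
    congr 1
    exact Finset.sum_congr rfl fun t _ => inst_irrel _ _ _ _ _
  have hAB' : Tendsto (fun n : ℕ => (∑ t ∈ Finset.range n, fAB t) / n) atTop
      (𝓝 (q0 * q1)) := by
    refine hAB.congr fun n => ?_
    simp only [hfABdef]
    congr 1
    exact Finset.sum_congr rfl fun t _ => inst_irrel _ _ _ _ _
  have hC' : Tendsto (fun n : ℕ => (∑ t ∈ Finset.range n, fC t) / n) atTop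
      (𝓝 ((1 - q0) * (1 - q1))) := by
    refine hC.congr fun n => ?_
    simp only [hfCdef]
    congr 1
    exact Finset.sum_congr rfl fun t _ => inst_irrel _ _ _ _ _
  have hone : Tendsto (fun n : ℕ => (∑ _t ∈ Finset.range n, (1:ℝ)) / n) atTop (𝓝 1) := by
    have heq : (fun _n : ℕ => (1:ℝ)) =ᶠ[atTop]
        (fun n : ℕ => (∑ _t ∈ Finset.range n, (1:ℝ)) / n) := by
      filter_upwards [eventually_ge_atTop 1] with n hn
      rw [Finset.sum_const, Finset.card_range, nsmul_eq_mul, mul_one,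
        div_self (by exact_mod_cast Nat.one_le_iff_ne_zero.mp hn)]
    exact tendsto_const_nhds.congr' heq
  -- range-sum limits for combined summands
  have hLsum : Tendsto (fun n : ℕ =>
      (∑ t ∈ Finset.range n, (fA t - fAB t + γ * fAB t)) / n) atTop
      (𝓝 (q1 - q0 * q1 + γ * (q0 * q1))) := by
    have h1 := (hA'.sub hAB').add (hAB'.const_mul γ)
    refine h1.congr fun n => ?_
    rw [Finset.sum_add_distrib, Finset.sum_sub_distrib, ← Finset.mul_sum]
    ring
  have hHsum : Tendsto (fun n : ℕ =>
      (∑ t ∈ Finset.range n, (1 - fA t)) / n) atTop (𝓝 (1 - q1)) := by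
    have h1 := hone.sub hA'
    refine h1.congr fun n => ?_
    rw [Finset.sum_sub_distrib]
    ring
  have hHtsum : Tendsto (fun n : ℕ =>
      (∑ t ∈ Finset.range n, β * fC t) / n) atTop
      (𝓝 (β * ((1 - q0) * (1 - q1)))) := by
    have h1 := hC'.const_mul β
    refine h1.congr fun n => ?_
    rw [← Finset.mul_sum, mul_div_assoc]
  -- limits of cnt/tot sequences
  have hcntL : Tendsto (fun n : ℕ => (cnt Act.L (h 1 n ω) : ℝ) / n) atTop (𝓝 q1) := by
    refine (hTend fA ((cnt Act.L (h 1 T ω) : ℝ)) q1 hA').congr' ?_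
    filter_upwards [eventually_ge_atTop T] with n hn
    rw [(key n hn).1]
  have htotL : Tendsto (fun n : ℕ => tot Act.L (h 1 n ω) / n) atTop
      (𝓝 (q1 - q0 * q1 + γ * (q0 * q1))) := by
    refine (hTend _ (tot Act.L (h 1 T ω)) _ hLsum).congr' ?_
    filter_upwards [eventually_ge_atTop T] with n hn
    rw [(key n hn).2.1]
  have hcntH : Tendsto (fun n : ℕ => (cnt Act.H (h 1 n ω) : ℝ) / n) atTop
      (𝓝 (1 - q1)) := by
    refine (hTend _ ((cnt Act.H (h 1 T ω) : ℝ)) _ hHsum).congr' ?_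
    filter_upwards [eventually_ge_atTop T] with n hn
    rw [(key n hn).2.2.1]
  have htotH : Tendsto (fun n : ℕ => tot Act.H (h 1 n ω) / n) atTop
      (𝓝 (β * ((1 - q0) * (1 - q1)))) := by
    refine (hTend _ (tot Act.H (h 1 T ω)) _ hHtsum).congr' ?_
    filter_upwards [eventually_ge_atTop T] with n hn
    rw [(key n hn).2.2.2]
  -- eventual positivity of counts
  have hq1' : (0:ℝ) < 1 - q1 := by linarith
  have hposL : ∀ᶠ n : ℕ in atTop, 0 < (cnt Act.L (h 1 n ω) : ℝ) := by
    filter_upwards [hcntL.eventually (eventually_gt_nhds (by linarith : q1 / 2 < q1)),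
      eventually_gt_atTop 0] with n h1 h2
    have hnpos : (0:ℝ) < n := by exact_mod_cast h2
    have := (lt_div_iff₀ hnpos).mp h1
    nlinarith
  have hposH : ∀ᶠ n : ℕ in atTop, 0 < (cnt Act.H (h 1 n ω) : ℝ) := by
    filter_upwards [hcntH.eventually (eventually_gt_nhds
      (by linarith : (1 - q1) / 2 < 1 - q1)), eventually_gt_atTop 0] with n h1 h2
    have hnpos : (0:ℝ) < n := by exact_mod_cast h2
    have := (lt_div_iff₀ hnpos).mp h1
    nlinarith
  -- limits of the value estimates
  have hvalL : Tendsto (fun n : ℕ => val Act.L (h 1 n ω)) atTop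
      (𝓝 ((q1 - q0 * q1 + γ * (q0 * q1)) / q1)) := by
    refine (htotL.div hcntL (ne_of_gt hq1pos)).congr' ?_
    filter_upwards [hposL, eventually_gt_atTop 0] with n h1 h2
    have hcne : (cnt Act.L (h 1 n ω) : ℝ) ≠ 0 := ne_of_gt h1
    have hnne : ((n:ℝ)) ≠ 0 := by exact_mod_cast Nat.pos_iff_ne_zero.mp h2
    rw [val, if_neg (fun h0 => hcne (by rw [h0]; simp)), Pi.div_apply]
    field_simp
  have hvalH : Tendsto (fun n : ℕ => val Act.H (h 1 n ω)) atTop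
      (𝓝 ((β * ((1 - q0) * (1 - q1))) / (1 - q1))) := by
    refine (htotH.div hcntH (ne_of_gt hq1')).congr' ?_
    filter_upwards [hposH, eventually_gt_atTop 0] with n h1 h2
    have hcne : (cnt Act.H (h 1 n ω) : ℝ) ≠ 0 := ne_of_gt h1
    have hnne : ((n:ℝ)) ≠ 0 := by exact_mod_cast Nat.pos_iff_ne_zero.mp h2
    rw [val, if_neg (fun h0 => hcne (by rw [h0]; simp)), Pi.div_apply]
    field_simp
  -- the two limits are strictly ordered
  have hlt : (β * ((1 - q0) * (1 - q1))) / (1 - q1) < (q1 - q0 * q1 + γ * (q0 * q1)) / q1 := by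
    have hne1 : (1:ℝ) - q1 ≠ 0 := ne_of_gt hq1'
    have e1 : (β * ((1 - q0) * (1 - q1))) / (1 - q1) = β * (1 - q0) := by
      field_simp
    have e2 : (q1 - q0 * q1 + γ * (q0 * q1)) / q1 = 1 - q0 + γ * q0 := by
      field_simp
    rw [e1, e2]
    nlinarith [hq0pos, hq0lt, hβ1, hγ0]
  have hfin := hvalH.eventually_lt hvalL hlt
  obtain ⟨n, hn1, hn2⟩ := (hfin.and (eventually_ge_atTop T)).exists
  exact absurd (hcon n hn2 1) (lt_asymm hn1)
end
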